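/- Let u ∈ C²(Ω × [0,T]) vanish on ∂Ω with Ω bounded smooth (or decay at infinity), and set the material derivative ů = u_t + u·∇u. Then the identity ∫ ů_j [∂_t Δu_j + div(u Δu_j)] dx = -∫ (|∇ů|² + ∂_i ů_j ∂_i u_j div u - ∂_i ů_j ∂_i u_k ∂_k u_j - ∂_i u_j ∂_i u_k ∂_k ů_j) dx holds, and consequently μ ∫ ů_j [∂_t Δu_j + div(u Δu_j)] dx ≤ -(7μ/8) ‖∇ů‖_{L²}² + C(μ) ∫ |∇u|⁴ dx. -/

import Mathlib

open MeasureTheory Real Set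
noncomputable section
abbrev E3 : Type := EuclideanSpace ℝ (Fin 3)
def e3 (i : Fin 3) : E3 := EuclideanSpace.single i 1
def pX (i : Fin 3) (f : ℝ × E3 → ℝ) (p : ℝ × E3) : ℝ := fderiv ℝ f p ((0 : ℝ), e3 i)
def pT (f : ℝ × E3 → ℝ) (p : ℝ × E3) : ℝ := fderiv ℝ f p ((1 : ℝ), (0 : E3))
def lapX (f : ℝ × E3 → ℝ) (p : ℝ × E3) : ℝ := ∑ i, pX i (pX i f) p

namespace Stmt18

variable {f g h : ℝ × E3 → ℝ} {p w a b : ℝ × E3}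

/-- generic directional derivative lemmas -/
lemma dd_sum (w : ℝ × E3) (F : Fin 3 → ℝ × E3 → ℝ) (hF : ∀ k, DifferentiableAt ℝ (F k) p) :
    fderiv ℝ (fun q => ∑ k, F k q) p w = ∑ k, fderiv ℝ (F k) p w := by
  rw [fderiv_fun_sum (fun k _ => hF k)]; simp

lemma dd_mul (w : ℝ × E3) (hf : DifferentiableAt ℝ f p) (hg : DifferentiableAt ℝ g p) :
    fderiv ℝ (fun q => f q * g q) p w = f p * fderiv ℝ g p w + g p * fderiv ℝ f p w := by
  rw [fderiv_fun_mul hf hg]; simp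

lemma dd_sub (w : ℝ × E3) (hf : DifferentiableAt ℝ f p) (hg : DifferentiableAt ℝ g p) :
    fderiv ℝ (fun q => f q - g q) p w = fderiv ℝ f p w - fderiv ℝ g p w := by
  rw [fderiv_fun_sub hf hg]; simp

lemma dd_add (w : ℝ × E3) (hf : DifferentiableAt ℝ f p) (hg : DifferentiableAt ℝ g p) :
    fderiv ℝ (fun q => f q + g q) p w = fderiv ℝ f p w + fderiv ℝ g p w := by
  rw [fderiv_fun_add hf hg]; simp

lemma dd_mul3 (w : ℝ × E3) (hf : DifferentiableAt ℝ f p) (hg : DifferentiableAt ℝ g p)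
    (hh : DifferentiableAt ℝ h p) :
    fderiv ℝ (fun q => f q * g q * h q) p w
      = f p * g p * fderiv ℝ h p w + f p * h p * fderiv ℝ g p w
        + g p * h p * fderiv ℝ f p w := by
  rw [dd_mul (f := fun q => f q * g q) w (hf.mul hg) hh, dd_mul w hf hg]; ring

lemma dd_comm (hf : ContDiff ℝ 2 f) (a b : ℝ × E3) (p : ℝ × E3) :
    fderiv ℝ (fun q => fderiv ℝ f q b) p a = fderiv ℝ (fun q => fderiv ℝ f q a) p b := by
  have hdf : DifferentiableAt ℝ (fderiv ℝ f) p :=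
    ((hf.fderiv_right (le_refl ((1:WithTop ℕ∞)+1))).differentiable one_ne_zero).differentiableAt
  rw [fderiv_clm_apply hdf (differentiableAt_const b),
    fderiv_clm_apply hdf (differentiableAt_const a)]
  simp only [fderiv_fun_const, Pi.zero_apply, ContinuousLinearMap.comp_zero,
    ContinuousLinearMap.zero_apply, zero_add, ContinuousLinearMap.add_apply,
    ContinuousLinearMap.flip_apply]
  exact (hf.contDiffAt.isSymmSndFDerivAt (by norm_num)) a b

/-- smoothness of directional derivatives -/
lemma contDiff_dd {n m : WithTop ℕ∞} (w : ℝ × E3) (hf : ContDiff ℝ n f) (hmn : m + 1 ≤ n) :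
    ContDiff ℝ m (fun p => fderiv ℝ f p w) :=
  (hf.fderiv_right hmn).clm_apply contDiff_const

lemma hcs_dd (w : ℝ × E3) (hf : HasCompactSupport f) :
    HasCompactSupport (fun p => fderiv ℝ f p w) :=
  (hf.fderiv ℝ).comp_left (g := fun L : (ℝ × E3) →L[ℝ] ℝ => L w) rfl

/-- pX / pT wrappers -/
lemma pX_sum (i : Fin 3) (F : Fin 3 → ℝ × E3 → ℝ) (hF : ∀ k, DifferentiableAt ℝ (F k) p) :
    pX i (fun q => ∑ k, F k q) p = ∑ k, pX i (F k) p := dd_sum _ F hF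

lemma pT_sum (F : Fin 3 → ℝ × E3 → ℝ) (hF : ∀ k, DifferentiableAt ℝ (F k) p) :
    pT (fun q => ∑ k, F k q) p = ∑ k, pT (F k) p := dd_sum _ F hF

lemma pX_mul (i : Fin 3) (hf : DifferentiableAt ℝ f p) (hg : DifferentiableAt ℝ g p) :
    pX i (fun q => f q * g q) p = f p * pX i g p + g p * pX i f p := dd_mul _ hf hg

lemma pX_sub (i : Fin 3) (hf : DifferentiableAt ℝ f p) (hg : DifferentiableAt ℝ g p) :
    pX i (fun q => f q - g q) p = pX i f p - pX i g p := dd_sub _ hf hg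

lemma pX_add (i : Fin 3) (hf : DifferentiableAt ℝ f p) (hg : DifferentiableAt ℝ g p) :
    pX i (fun q => f q + g q) p = pX i f p + pX i g p := dd_add _ hf hg

lemma pX_mul3 (i : Fin 3) (hf : DifferentiableAt ℝ f p) (hg : DifferentiableAt ℝ g p)
    (hh : DifferentiableAt ℝ h p) :
    pX i (fun q => f q * g q * h q) p
      = f p * g p * pX i h p + f p * h p * pX i g p + g p * h p * pX i f p :=
  dd_mul3 _ hf hg hh

lemma pXX_comm (hf : ContDiff ℝ 2 f) (a b : Fin 3) (p : ℝ × E3) :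
    pX a (pX b f) p = pX b (pX a f) p := dd_comm hf _ _ p

lemma pTX_comm (hf : ContDiff ℝ 2 f) (a : Fin 3) (p : ℝ × E3) :
    pT (pX a f) p = pX a (pT f) p := dd_comm hf _ _ p

lemma pXX_comm' (hf : ContDiff ℝ 2 f) (a b : Fin 3) :
    pX a (pX b f) = pX b (pX a f) := funext fun p => pXX_comm hf a b p

lemma pTX_comm' (hf : ContDiff ℝ 2 f) (a : Fin 3) :
    pT (pX a f) = pX a (pT f) := funext fun p => pTX_comm hf a p

lemma contDiff_pX {n m : WithTop ℕ∞} (i : Fin 3) (hf : ContDiff ℝ n f) (hmn : m + 1 ≤ n) :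
    ContDiff ℝ m (pX i f) := contDiff_dd _ hf hmn

lemma contDiff_pT {n m : WithTop ℕ∞} (hf : ContDiff ℝ n f) (hmn : m + 1 ≤ n) :
    ContDiff ℝ m (pT f) := contDiff_dd _ hf hmn

lemma hcs_pX (i : Fin 3) (hf : HasCompactSupport f) : HasCompactSupport (pX i f) :=
  hcs_dd _ hf

lemma hcs_pT (hf : HasCompactSupport f) : HasCompactSupport (pT f) := hcs_dd _ hf

lemma hcs_sum3 {F : Fin 3 → ℝ × E3 → ℝ} (h : ∀ k, HasCompactSupport (F k)) :
    HasCompactSupport (fun q => ∑ k, F k q) := by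
  simp only [Fin.sum_univ_three]
  exact ((h 0).add (h 1)).add (h 2)

lemma hcs_slice (hf : HasCompactSupport f) (t : ℝ) :
    HasCompactSupport (fun x : E3 => f (t, x)) := by
  have hiso : Isometry (fun x : E3 => ((t, x) : ℝ × E3)) := by
    intro x y
    simp [Prod.edist_eq, edist_self]
  exact hf.comp_isClosedEmbedding hiso.isClosedEmbedding

lemma contDiff_slice {n : WithTop ℕ∞} (hf : ContDiff ℝ n f) (t : ℝ) :
    ContDiff ℝ n (fun x : E3 => f (t, x)) :=
  hf.comp (contDiff_const.prodMk contDiff_id)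

lemma integrable_slice (hf : Continuous f) (hs : HasCompactSupport f) (t : ℝ) :
    Integrable (fun x : E3 => f (t, x)) :=
  (hf.comp (by continuity)).integrable_of_hasCompactSupport (hcs_slice hs t)

lemma slice_fderiv (hf : ContDiff ℝ 1 f) (t : ℝ) (x : E3) (i : Fin 3) :
    fderiv ℝ (fun x : E3 => f (t, x)) x (e3 i) = pX i f (t, x) := by
  have h1 : HasFDerivAt (fun x : E3 => ((t, x) : ℝ × E3))
      (ContinuousLinearMap.inr ℝ ℝ E3) x := hasFDerivAt_prodMk_right t x
  have h2 : HasFDerivAt f (fderiv ℝ f (t, x)) (t, x) :=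
    (hf.differentiable one_ne_zero (t, x)).hasFDerivAt
  have h3 : HasFDerivAt (fun x : E3 => f (t, x))
      ((fderiv ℝ f (t, x)).comp (ContinuousLinearMap.inr ℝ ℝ E3)) x := h2.comp x h1
  rw [h3.fderiv]
  rfl

lemma integral_pX_eq_zero (hf : ContDiff ℝ 1 f) (hs : HasCompactSupport f) (i : Fin 3)
    (t : ℝ) : ∫ x : E3, pX i f (t, x) = 0 := by
  set g : E3 → ℝ := fun x => f (t, x) with hg
  have hgc : ContDiff ℝ 1 g := contDiff_slice hf t
  have hgs : HasCompactSupport g := hcs_slice hs t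
  have key : ∀ x : E3, fderiv ℝ g x (e3 i) = pX i f (t, x) := fun x => slice_fderiv hf t x i
  have hint : Integrable (fun x => (1:ℝ) * fderiv ℝ g x (e3 i)) := by
    simp only [one_mul]
    refine Continuous.integrable_of_hasCompactSupport ?_ ?_
    · exact (ContinuousLinearMap.apply ℝ ℝ (e3 i)).continuous.comp
        (hgc.continuous_fderiv one_ne_zero)
    · exact (hgs.fderiv ℝ).comp_left (g := fun L : E3 →L[ℝ] ℝ => L (e3 i)) rfl
  have h0 : Integrable (fun x => fderiv ℝ (fun _ : E3 => (1:ℝ)) x (e3 i) * g x) := by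
    simp [fderiv_fun_const]
  have hfg : Integrable (fun x => (1:ℝ) * g x) := by
    simpa using (hgc.continuous).integrable_of_hasCompactSupport hgs
  have := integral_mul_fderiv_eq_neg_fderiv_mul_of_integrable (f := fun _ : E3 => (1:ℝ))
    (g := g) (v := e3 i) h0 hint hfg (fun x _ => differentiableAt_const 1) (fun x _ => hgc.differentiable one_ne_zero x)
  simp only [one_mul, fderiv_fun_const, Pi.zero_apply, ContinuousLinearMap.zero_apply, zero_mul,
    integral_zero, neg_zero] at this
  calc ∫ x : E3, pX i f (t, x) = ∫ x : E3, fderiv ℝ g x (e3 i) := by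
        simp only [key]
    _ = 0 := this


def Wf (u v : Fin 3 → ℝ × E3 → ℝ) (j i : Fin 3) : ℝ × E3 → ℝ := fun q =>
  v j q * pX i (fun q' => v j q' - ∑ k, u k q' * pX k (u j) q') q
  + v j q * u i q * lapX (u j) q
  + ∑ k, (u i q * pX k (v j) q * pX k (u j) q - pX k (v j) q * u k q * pX i (u j) q)

lemma ptwise (u v : Fin 3 → ℝ × E3 → ℝ) (hu : ∀ k, ContDiff ℝ 3 (u k))
    (hv2 : ∀ k, ContDiff ℝ 2 (v k))
    (hTU : ∀ j, pT (u j) = fun q => v j q - ∑ k, u k q * pX k (u j) q)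
    (j : Fin 3) (p : ℝ × E3) :
    v j p * (pT (lapX (u j)) p + ∑ i, pX i (fun q => u i q * lapX (u j) q) p)
      + ((∑ i, (pX i (v j) p)^2)
        + (∑ i, pX i (v j) p * pX i (u j) p * (∑ k, pX k (u k) p))
        - (∑ i, ∑ k, pX i (v j) p * pX i (u k) p * pX k (u j) p)
        - (∑ i, ∑ k, pX i (u j) p * pX i (u k) p * pX k (v j) p))
    = ∑ i, pX i (Wf u v j i) p := by
  -- differentiability arsenal
  have hu2 : ∀ k, ContDiff ℝ 2 (u k) := fun k => (hu k).of_le (by norm_num)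
  have du : ∀ k, Differentiable ℝ (u k) := fun k => (hu k).differentiable (by norm_num)
  have cXu : ∀ i k, ContDiff ℝ 2 (pX i (u k)) := fun i k => contDiff_pX i (hu k) (by norm_num)
  have dXu : ∀ i k, Differentiable ℝ (pX i (u k)) := fun i k =>
    (cXu i k).differentiable (by norm_num)
  have cXXu : ∀ a b k, ContDiff ℝ 1 (pX a (pX b (u k))) := fun a b k =>
    contDiff_pX a (cXu b k) (by norm_num)
  have dXXu : ∀ a b k, Differentiable ℝ (pX a (pX b (u k))) := fun a b k =>
    (cXXu a b k).differentiable one_ne_zero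
  have dv : ∀ k, Differentiable ℝ (v k) := fun k => (hv2 k).differentiable (by norm_num)
  have cXv : ∀ i k, ContDiff ℝ 1 (pX i (v k)) := fun i k => contDiff_pX i (hv2 k) (by norm_num)
  have dXv : ∀ i k, Differentiable ℝ (pX i (v k)) := fun i k => (cXv i k).differentiable one_ne_zero
  have clap : ∀ k, ContDiff ℝ 1 (lapX (u k)) := fun k => ContDiff.sum (fun i _ => cXXu i i k)
  have dlap : ∀ k, Differentiable ℝ (lapX (u k)) := fun k => (clap k).differentiable one_ne_zero
  have dS : Differentiable ℝ (fun q => ∑ k, u k q * pX k (u j) q) :=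
    Differentiable.fun_sum (fun k _ => (du k).mul (dXu k j))
  have cTU : ContDiff ℝ 2 (fun q => v j q - ∑ k, u k q * pX k (u j) q) :=
    (hv2 j).sub (ContDiff.sum (fun k _ => (hu2 k).mul (cXu k j)))
  have dXTU : ∀ i, Differentiable ℝ (pX i (fun q => v j q - ∑ k, u k q * pX k (u j) q)) :=
    fun i => (contDiff_pX i cTU (by norm_num)).differentiable one_ne_zero
  -- first derivative of (v - u·∇u), as functions
  have e1 : ∀ (i : Fin 3), pX i (fun q => v j q - ∑ k, u k q * pX k (u j) q)
      = fun q => pX i (v j) q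
          - ∑ k, (u k q * pX i (pX k (u j)) q + pX k (u j) q * pX i (u k) q) := by
    intro i; funext q
    have h1 : pX i (fun q => v j q - ∑ k, u k q * pX k (u j) q) q
        = pX i (v j) q - pX i (fun q => ∑ k, u k q * pX k (u j) q) q :=
      pX_sub i ((dv j) q) (dS q)
    have h2 : pX i (fun q => ∑ k, u k q * pX k (u j) q) q
        = ∑ k, pX i (fun q => u k q * pX k (u j) q) q :=
      pX_sum i (fun k q => u k q * pX k (u j) q) (fun k => ((du k).mul (dXu k j)) q)
    have h3 : ∀ k : Fin 3, pX i (fun q => u k q * pX k (u j) q) q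
        = u k q * pX i (pX k (u j)) q + pX k (u j) q * pX i (u k) q :=
      fun k => pX_mul i ((du k) q) ((dXu k j) q)
    rw [h1, h2]
    simp only [h3]
  -- second derivative of (v - u·∇u) at p
  have hB2 : ∀ (i : Fin 3), pX i (pX i (fun q => v j q - ∑ k, u k q * pX k (u j) q)) p
      = pX i (pX i (v j)) p
        - ∑ k, (u k p * pX i (pX i (pX k (u j))) p + pX i (pX k (u j)) p * pX i (u k) p
            + pX k (u j) p * pX i (pX i (u k)) p + pX i (u k) p * pX i (pX k (u j)) p) := by
    intro i
    rw [e1 i]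
    have h1 : pX i (fun q => pX i (v j) q
          - ∑ k, (u k q * pX i (pX k (u j)) q + pX k (u j) q * pX i (u k) q)) p
        = pX i (pX i (v j)) p - pX i (fun q =>
            ∑ k, (u k q * pX i (pX k (u j)) q + pX k (u j) q * pX i (u k) q)) p :=
      pX_sub i ((dXv i j) p)
        ((Differentiable.fun_sum (fun k _ =>
          ((du k).mul (dXXu i k j)).add ((dXu k j).mul (dXu i k)))) p)
    have h2 : pX i (fun q =>
          ∑ k, (u k q * pX i (pX k (u j)) q + pX k (u j) q * pX i (u k) q)) p
        = ∑ k, pX i (fun q =>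
            u k q * pX i (pX k (u j)) q + pX k (u j) q * pX i (u k) q) p :=
      pX_sum i _ (fun k => (((du k).mul (dXXu i k j)).add ((dXu k j).mul (dXu i k))) p)
    have h3 : ∀ k : Fin 3, pX i (fun q =>
          u k q * pX i (pX k (u j)) q + pX k (u j) q * pX i (u k) q) p
        = u k p * pX i (pX i (pX k (u j))) p + pX i (pX k (u j)) p * pX i (u k) p
            + pX k (u j) p * pX i (pX i (u k)) p + pX i (u k) p * pX i (pX k (u j)) p := by
      intro k
      have ha : pX i (fun q => u k q * pX i (pX k (u j)) q + pX k (u j) q * pX i (u k) q) p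
          = pX i (fun q => u k q * pX i (pX k (u j)) q) p
            + pX i (fun q => pX k (u j) q * pX i (u k) q) p :=
        pX_add i (((du k).mul (dXXu i k j)) p) (((dXu k j).mul (dXu i k)) p)
      have hb : pX i (fun q => u k q * pX i (pX k (u j)) q) p
          = u k p * pX i (pX i (pX k (u j))) p + pX i (pX k (u j)) p * pX i (u k) p :=
        pX_mul i ((du k) p) ((dXXu i k j) p)
      have hc : pX i (fun q => pX k (u j) q * pX i (u k) q) p
          = pX k (u j) p * pX i (pX i (u k)) p + pX i (u k) p * pX i (pX k (u j)) p :=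
        pX_mul i ((dXu k j) p) ((dXu i k) p)
      rw [ha, hb, hc]; ring
    rw [h1, h2]
    simp only [h3]
  -- time derivative of the laplacian
  have hA : pT (lapX (u j)) p
      = ∑ i, pX i (pX i (fun q => v j q - ∑ k, u k q * pX k (u j) q)) p := by
    have h0 : pT (lapX (u j)) p = ∑ i, pT (pX i (pX i (u j))) p :=
      pT_sum (fun i => pX i (pX i (u j))) (fun i => (dXXu i i j) p)
    rw [h0]
    refine Finset.sum_congr rfl (fun i _ => ?_)
    rw [pTX_comm (cXu i j) i p, pTX_comm' (hu2 j) i, hTU j]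
  -- transport term
  have hC2 : ∀ (i : Fin 3), pX i (fun q => u i q * lapX (u j) q) p
      = u i p * pX i (lapX (u j)) p + lapX (u j) p * pX i (u i) p :=
    fun i => pX_mul i ((du i) p) ((dlap j) p)
  have hC3 : ∀ (i : Fin 3), pX i (lapX (u j)) p = ∑ k, pX i (pX k (pX k (u j))) p :=
    fun i => pX_sum i (fun k => pX k (pX k (u j))) (fun k => (dXXu k k j) p)
  have hlapp : lapX (u j) p = ∑ k, pX k (pX k (u j)) p := rfl
  -- divergence term expansion
  have hW : ∀ (i : Fin 3), pX i (Wf u v j i) p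
      = (v j p * (pX i (pX i (v j)) p
            - ∑ k, (u k p * pX i (pX i (pX k (u j))) p + pX i (pX k (u j)) p * pX i (u k) p
                + pX k (u j) p * pX i (pX i (u k)) p + pX i (u k) p * pX i (pX k (u j)) p))
          + (pX i (v j) p - ∑ k, (u k p * pX i (pX k (u j)) p + pX k (u j) p * pX i (u k) p))
              * pX i (v j) p)
        + (v j p * u i p * (∑ k, pX i (pX k (pX k (u j))) p)
            + v j p * (∑ k, pX k (pX k (u j)) p) * pX i (u i) p
            + u i p * (∑ k, pX k (pX k (u j)) p) * pX i (v j) p)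
        + ∑ k, ((u i p * pX k (v j) p * pX i (pX k (u j)) p
                + u i p * pX k (u j) p * pX i (pX k (v j)) p
                + pX k (v j) p * pX k (u j) p * pX i (u i) p)
            - (pX k (v j) p * u k p * pX i (pX i (u j)) p
                + pX k (v j) p * pX i (u j) p * pX i (u k) p
                + u k p * pX i (u j) p * pX i (pX k (v j)) p)) := by
    intro i
    have dA : Differentiable ℝ (fun q =>
        v j q * pX i (fun q' => v j q' - ∑ k, u k q' * pX k (u j) q') q) :=
      (dv j).mul (dXTU i)
    have dB : Differentiable ℝ (fun q => v j q * u i q * lapX (u j) q) :=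
      ((dv j).mul (du i)).mul (dlap j)
    have dCk : ∀ k : Fin 3, Differentiable ℝ (fun q =>
        u i q * pX k (v j) q * pX k (u j) q - pX k (v j) q * u k q * pX i (u j) q) :=
      fun k => (((du i).mul (dXv k j)).mul (dXu k j)).sub (((dXv k j).mul (du k)).mul (dXu i j))
    have dC : Differentiable ℝ (fun q =>
        ∑ k, (u i q * pX k (v j) q * pX k (u j) q - pX k (v j) q * u k q * pX i (u j) q)) :=
      Differentiable.fun_sum (fun k _ => dCk k)
    have h0 : pX i (Wf u v j i) p
        = pX i (fun q => v j q * pX i (fun q' => v j q' - ∑ k, u k q' * pX k (u j) q') q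
            + v j q * u i q * lapX (u j) q) p
          + pX i (fun q => ∑ k, (u i q * pX k (v j) q * pX k (u j) q
              - pX k (v j) q * u k q * pX i (u j) q)) p :=
      pX_add i ((dA.add dB) p) (dC p)
    have h1 : pX i (fun q => v j q * pX i (fun q' => v j q' - ∑ k, u k q' * pX k (u j) q') q
          + v j q * u i q * lapX (u j) q) p
        = pX i (fun q => v j q * pX i (fun q' => v j q' - ∑ k, u k q' * pX k (u j) q') q) p
          + pX i (fun q => v j q * u i q * lapX (u j) q) p :=
      pX_add i (dA p) (dB p)
    have h2 : pX i (fun q => v j q * pX i (fun q' => v j q' - ∑ k, u k q' * pX k (u j) q') q) p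
        = v j p * pX i (pX i (fun q' => v j q' - ∑ k, u k q' * pX k (u j) q')) p
          + pX i (fun q' => v j q' - ∑ k, u k q' * pX k (u j) q') p * pX i (v j) p :=
      pX_mul i ((dv j) p) ((dXTU i) p)
    have h3 : pX i (fun q => v j q * u i q * lapX (u j) q) p
        = v j p * u i p * pX i (lapX (u j)) p + v j p * lapX (u j) p * pX i (u i) p
          + u i p * lapX (u j) p * pX i (v j) p :=
      pX_mul3 i ((dv j) p) ((du i) p) ((dlap j) p)
    have h4 : pX i (fun q => ∑ k, (u i q * pX k (v j) q * pX k (u j) q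
          - pX k (v j) q * u k q * pX i (u j) q)) p
        = ∑ k, pX i (fun q => u i q * pX k (v j) q * pX k (u j) q
            - pX k (v j) q * u k q * pX i (u j) q) p :=
      pX_sum i _ (fun k => (dCk k) p)
    have h5 : ∀ k : Fin 3, pX i (fun q => u i q * pX k (v j) q * pX k (u j) q
          - pX k (v j) q * u k q * pX i (u j) q) p
        = (u i p * pX k (v j) p * pX i (pX k (u j)) p
            + u i p * pX k (u j) p * pX i (pX k (v j)) p
            + pX k (v j) p * pX k (u j) p * pX i (u i) p)
          - (pX k (v j) p * u k p * pX i (pX i (u j)) p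
            + pX k (v j) p * pX i (u j) p * pX i (u k) p
            + u k p * pX i (u j) p * pX i (pX k (v j)) p) := by
      intro k
      have ha : pX i (fun q => u i q * pX k (v j) q * pX k (u j) q
            - pX k (v j) q * u k q * pX i (u j) q) p
          = pX i (fun q => u i q * pX k (v j) q * pX k (u j) q) p
            - pX i (fun q => pX k (v j) q * u k q * pX i (u j) q) p :=
        pX_sub i ((((du i).mul (dXv k j)).mul (dXu k j)) p)
          ((((dXv k j).mul (du k)).mul (dXu i j)) p)
      have hb : pX i (fun q => u i q * pX k (v j) q * pX k (u j) q) p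
          = u i p * pX k (v j) p * pX i (pX k (u j)) p
            + u i p * pX k (u j) p * pX i (pX k (v j)) p
            + pX k (v j) p * pX k (u j) p * pX i (u i) p :=
        pX_mul3 i ((du i) p) ((dXv k j) p) ((dXu k j) p)
      have hc : pX i (fun q => pX k (v j) q * u k q * pX i (u j) q) p
          = pX k (v j) p * u k p * pX i (pX i (u j)) p
            + pX k (v j) p * pX i (u j) p * pX i (u k) p
            + u k p * pX i (u j) p * pX i (pX k (v j)) p :=
        pX_mul3 i ((dXv k j) p) ((du k) p) ((dXu i j) p)
      rw [ha, hb, hc]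
    rw [h0, h1, h2, h3, hB2 i]
    have e1p : pX i (fun q' => v j q' - ∑ k, u k q' * pX k (u j) q') p
        = pX i (v j) p - ∑ k, (u k p * pX i (pX k (u j)) p + pX k (u j) p * pX i (u k) p) :=
      congrFun (e1 i) p
    rw [e1p, h4]
    simp only [h5, hC3 i, hlapp]
  -- sort multi-indices of symmetric derivatives and conclude by ring
  have su10 : ∀ k, pX 1 (pX 0 (u k)) = pX 0 (pX 1 (u k)) := fun k => pXX_comm' (hu2 k) 1 0
  have su20 : ∀ k, pX 2 (pX 0 (u k)) = pX 0 (pX 2 (u k)) := fun k => pXX_comm' (hu2 k) 2 0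
  have su21 : ∀ k, pX 2 (pX 1 (u k)) = pX 1 (pX 2 (u k)) := fun k => pXX_comm' (hu2 k) 2 1
  have t10 : ∀ (c k : Fin 3), pX 1 (pX 0 (pX c (u k))) = pX 0 (pX 1 (pX c (u k))) :=
    fun c k => pXX_comm' (cXu c k) 1 0
  have t20 : ∀ (c k : Fin 3), pX 2 (pX 0 (pX c (u k))) = pX 0 (pX 2 (pX c (u k))) :=
    fun c k => pXX_comm' (cXu c k) 2 0
  have t21 : ∀ (c k : Fin 3), pX 2 (pX 1 (pX c (u k))) = pX 1 (pX 2 (pX c (u k))) :=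
    fun c k => pXX_comm' (cXu c k) 2 1
  have sv10 : pX 1 (pX 0 (v j)) = pX 0 (pX 1 (v j)) := pXX_comm' (hv2 j) 1 0
  have sv20 : pX 2 (pX 0 (v j)) = pX 0 (pX 2 (v j)) := pXX_comm' (hv2 j) 2 0
  have sv21 : pX 2 (pX 1 (v j)) = pX 1 (pX 2 (v j)) := pXX_comm' (hv2 j) 2 1
  rw [hA]
  simp only [hB2, hC2, hC3, hlapp, hW]
  simp only [Fin.sum_univ_three]
  simp only [su10, su20, su21, t10, t20, t21, sv10, sv20, sv21]
  ring


lemma hcs_sub {f g : ℝ × E3 → ℝ} (hf : HasCompactSupport f) (hg : HasCompactSupport g) :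
    HasCompactSupport (fun q => f q - g q) :=
  hf.comp₂_left hg (by simp)

lemma hcs_sq {f : ℝ × E3 → ℝ} (hf : HasCompactSupport f) :
    HasCompactSupport (fun q => (f q)^2) :=
  hf.comp_left (g := fun x : ℝ => x^2) (by simp)

end Stmt18

open Stmt18

lemma young_bound (c d : Fin 3 → Fin 3 → ℝ) :
    -((∑ i, ∑ j, (d i j)^2)/8) - 54 * (∑ i, ∑ j, (c i j)^2)^2
    ≤ (∑ i, ∑ j, d i j * c i j * (∑ k, c k k))
      - (∑ i, ∑ j, ∑ k, d i j * c i k * c k j)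
      - (∑ i, ∑ j, ∑ k, c i j * c i k * d k j) := by
  set T : ℝ := ∑ k, c k k with hT
  have hd : ∀ (x E : ℝ), -(x^2/24) - 6*E^2 ≤ x * E := by
    intro x E; nlinarith [sq_nonneg (x + 12*E)]
  have hcs : ∀ i j : Fin 3, (c i 0*c 0 j + c i 1*c 1 j + c i 2*c 2 j)^2
      ≤ (c i 0^2 + c i 1^2 + c i 2^2) * (c 0 j^2 + c 1 j^2 + c 2 j^2) := by
    intro i j
    nlinarith [sq_nonneg (c i 0*c 1 j - c i 1*c 0 j), sq_nonneg (c i 0*c 2 j - c i 2*c 0 j),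
      sq_nonneg (c i 1*c 2 j - c i 2*c 1 j)]
  have hcs' : ∀ k j : Fin 3, (c 0 j*c 0 k + c 1 j*c 1 k + c 2 j*c 2 k)^2
      ≤ (c 0 j^2 + c 1 j^2 + c 2 j^2) * (c 0 k^2 + c 1 k^2 + c 2 k^2) := by
    intro k j
    nlinarith [sq_nonneg (c 0 j*c 1 k - c 1 j*c 0 k), sq_nonneg (c 0 j*c 2 k - c 2 j*c 0 k),
      sq_nonneg (c 1 j*c 2 k - c 2 j*c 1 k)]
  have hQ0 : (0:ℝ) ≤ ∑ i, ∑ j, (c i j)^2 := by positivity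
  have hT3 : T^2 ≤ 3 * (∑ i, ∑ j, (c i j)^2) := by
    simp only [hT, Fin.sum_univ_three]
    nlinarith [sq_nonneg (c 0 0 - c 1 1), sq_nonneg (c 0 0 - c 2 2), sq_nonneg (c 1 1 - c 2 2),
      sq_nonneg (c 0 1), sq_nonneg (c 0 2), sq_nonneg (c 1 0), sq_nonneg (c 1 2),
      sq_nonneg (c 2 0), sq_nonneg (c 2 1)]
  -- term B
  have hB : -((∑ i, ∑ j, (d i j)^2)/24) - 6*(∑ i, ∑ j, (c i j)^2)*T^2
      ≤ ∑ i, ∑ j, d i j * c i j * T := by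
    simp only [Fin.sum_univ_three]
    linarith [hd (d 0 0) (c 0 0 * T), hd (d 0 1) (c 0 1 * T), hd (d 0 2) (c 0 2 * T),
      hd (d 1 0) (c 1 0 * T), hd (d 1 1) (c 1 1 * T), hd (d 1 2) (c 1 2 * T),
      hd (d 2 0) (c 2 0 * T), hd (d 2 1) (c 2 1 * T), hd (d 2 2) (c 2 2 * T)]
  -- term C
  have hC : -((∑ i, ∑ j, (d i j)^2)/24) - 6*(∑ i, ∑ j, (c i j)^2)^2
      ≤ -(∑ i, ∑ j, ∑ k, d i j * c i k * c k j) := by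
    simp only [Fin.sum_univ_three]
    linarith [hd (-(d 0 0)) (c 0 0*c 0 0 + c 0 1*c 1 0 + c 0 2*c 2 0),
      hd (-(d 0 1)) (c 0 0*c 0 1 + c 0 1*c 1 1 + c 0 2*c 2 1),
      hd (-(d 0 2)) (c 0 0*c 0 2 + c 0 1*c 1 2 + c 0 2*c 2 2),
      hd (-(d 1 0)) (c 1 0*c 0 0 + c 1 1*c 1 0 + c 1 2*c 2 0),
      hd (-(d 1 1)) (c 1 0*c 0 1 + c 1 1*c 1 1 + c 1 2*c 2 1),
      hd (-(d 1 2)) (c 1 0*c 0 2 + c 1 1*c 1 2 + c 1 2*c 2 2),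
      hd (-(d 2 0)) (c 2 0*c 0 0 + c 2 1*c 1 0 + c 2 2*c 2 0),
      hd (-(d 2 1)) (c 2 0*c 0 1 + c 2 1*c 1 1 + c 2 2*c 2 1),
      hd (-(d 2 2)) (c 2 0*c 0 2 + c 2 1*c 1 2 + c 2 2*c 2 2),
      hcs 0 0, hcs 0 1, hcs 0 2, hcs 1 0, hcs 1 1, hcs 1 2, hcs 2 0, hcs 2 1, hcs 2 2]
  -- term D
  have hD : -((∑ i, ∑ j, (d i j)^2)/24) - 6*(∑ i, ∑ j, (c i j)^2)^2
      ≤ -(∑ i, ∑ j, ∑ k, c i j * c i k * d k j) := by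
    simp only [Fin.sum_univ_three]
    linarith [hd (-(d 0 0)) (c 0 0*c 0 0 + c 1 0*c 1 0 + c 2 0*c 2 0),
      hd (-(d 0 1)) (c 0 1*c 0 0 + c 1 1*c 1 0 + c 2 1*c 2 0),
      hd (-(d 0 2)) (c 0 2*c 0 0 + c 1 2*c 1 0 + c 2 2*c 2 0),
      hd (-(d 1 0)) (c 0 0*c 0 1 + c 1 0*c 1 1 + c 2 0*c 2 1),
      hd (-(d 1 1)) (c 0 1*c 0 1 + c 1 1*c 1 1 + c 2 1*c 2 1),
      hd (-(d 1 2)) (c 0 2*c 0 1 + c 1 2*c 1 1 + c 2 2*c 2 1),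
      hd (-(d 2 0)) (c 0 0*c 0 2 + c 1 0*c 1 2 + c 2 0*c 2 2),
      hd (-(d 2 1)) (c 0 1*c 0 2 + c 1 1*c 1 2 + c 2 1*c 2 2),
      hd (-(d 2 2)) (c 0 2*c 0 2 + c 1 2*c 1 2 + c 2 2*c 2 2),
      hcs' 0 0, hcs' 0 1, hcs' 0 2, hcs' 1 0, hcs' 1 1, hcs' 1 2, hcs' 2 0, hcs' 2 1, hcs' 2 2]
  have hprod : (∑ i, ∑ j, (c i j)^2) * T^2 ≤ (∑ i, ∑ j, (c i j)^2) * (3 * (∑ i, ∑ j, (c i j)^2)) :=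
    mul_le_mul_of_nonneg_left hT3 hQ0
  nlinarith [hB, hC, hD, hprod, sq_nonneg (∑ i, ∑ j, (c i j)^2)]

/-- identity (A.4). For u vanishing at infinity (compactly
supported, smooth enough), with ů = u_t + u·∇u,
∫ ů_j[∂_tΔu_j + div(uΔu_j)] dx
  = -∫(|∇ů|² + ∂_iů_j∂_iu_j div u - ∂_iů_j∂_iu_k∂_ku_j - ∂_iu_j∂_iu_k∂_ků_j) dx,
and consequently μ∫ů_j[∂_tΔu_j + div(uΔu_j)] dx ≤ -(7μ/8)‖∇ů‖₂² + C(μ)∫|∇u|⁴. -/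
theorem stmt_18 (μ : ℝ) (hμ : 0 < μ) :
    ∃ C > 0, ∀ (u : ℝ × E3 → Fin 3 → ℝ),
      (∀ j, ContDiff ℝ 3 (fun p => u p j)) →
      (∀ j, HasCompactSupport (fun p => u p j)) →
      ∀ (udot : Fin 3 → ℝ × E3 → ℝ),
      udot = (fun j q => pT (fun q' => u q' j) q
          + ∑ k, u q k * pX k (fun q' => u q' j) q) →
      ∀ t : ℝ,
      (∫ x : E3, ∑ j, udot j (t, x)
            * (pT (lapX (fun q' => u q' j)) (t, x)
              + ∑ i, pX i (fun q => u q i * lapX (fun q' => u q' j) q) (t, x))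
        = -∫ x : E3,
            ((∑ i, ∑ j, (pX i (udot j) (t, x))^2)
              + (∑ i, ∑ j, pX i (udot j) (t, x) * pX i (fun q => u q j) (t, x)
                  * (∑ k, pX k (fun q => u q k) (t, x)))
              - (∑ i, ∑ j, ∑ k, pX i (udot j) (t, x) * pX i (fun q => u q k) (t, x)
                  * pX k (fun q => u q j) (t, x))
              - (∑ i, ∑ j, ∑ k, pX i (fun q => u q j) (t, x)
                  * pX i (fun q => u q k) (t, x) * pX k (udot j) (t, x))))
      ∧ μ * ∫ x : E3, ∑ j, udot j (t, x)
            * (pT (lapX (fun q' => u q' j)) (t, x)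
              + ∑ i, pX i (fun q => u q i * lapX (fun q' => u q' j) q) (t, x))
        ≤ -(7*μ/8) * (∫ x : E3, ∑ i, ∑ j, (pX i (udot j) (t, x))^2)
          + C * ∫ x : E3, (∑ i, ∑ j, (pX i (fun q => u q j) (t, x))^2)^2 := by
  refine ⟨54*μ, by positivity, ?_⟩
  intro u hu hus udot hudot t
  -- basic regularity of udot
  have hv2 : ∀ j, ContDiff ℝ 2 (udot j) := by
    intro j; rw [hudot]
    exact ContDiff.add (contDiff_pT (hu j) (by norm_num))
      (ContDiff.sum (fun k _ => ((hu k).of_le (by norm_num)).mul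
        (contDiff_pX k (hu j) (by norm_num))))
  have hvs : ∀ j, HasCompactSupport (udot j) := by
    intro j; rw [hudot]
    exact HasCompactSupport.add (hcs_pT (hus j)) (hcs_sum3 (fun k => (hus k).mul_right))
  have hTU : ∀ j, pT (fun q' => u q' j)
      = fun q => udot j q - ∑ k, u q k * pX k (fun q' => u q' j) q := by
    intro j; funext q; rw [hudot]
    show pT (fun q' => u q' j) q
      = (pT (fun q' => u q' j) q + ∑ k, u q k * pX k (fun q' => u q' j) q)
        - ∑ k, u q k * pX k (fun q' => u q' j) q
    ring
  -- pointwise divergence identity, per component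
  have hptw : ∀ (j : Fin 3) (p : ℝ × E3),
      udot j p * (pT (lapX (fun q' => u q' j)) p
          + ∑ i, pX i (fun q => u q i * lapX (fun q' => u q' j) q) p)
        + ((∑ i, (pX i (udot j) p)^2)
          + (∑ i, pX i (udot j) p * pX i (fun q => u q j) p * (∑ k, pX k (fun q => u q k) p))
          - (∑ i, ∑ k, pX i (udot j) p * pX i (fun q => u q k) p * pX k (fun q => u q j) p)
          - (∑ i, ∑ k, pX i (fun q => u q j) p * pX i (fun q => u q k) p * pX k (udot j) p))
      = ∑ i, pX i (Wf (fun j q => u q j) udot j i) p :=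
    fun j p => ptwise (fun j q => u q j) udot hu hv2 hTU j p
  -- combined pointwise identity
  have hpt2 : ∀ p : ℝ × E3,
      (∑ j, udot j p * (pT (lapX (fun q' => u q' j)) p
          + ∑ i, pX i (fun q => u q i * lapX (fun q' => u q' j) q) p))
        + ((∑ i, ∑ j, (pX i (udot j) p)^2)
          + (∑ i, ∑ j, pX i (udot j) p * pX i (fun q => u q j) p
              * (∑ k, pX k (fun q => u q k) p))
          - (∑ i, ∑ j, ∑ k, pX i (udot j) p * pX i (fun q => u q k) p
              * pX k (fun q => u q j) p)
          - (∑ i, ∑ j, ∑ k, pX i (fun q => u q j) p * pX i (fun q => u q k) p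
              * pX k (udot j) p))
      = ∑ j, ∑ i, pX i (Wf (fun j q => u q j) udot j i) p := by
    intro p
    have hA' : (∑ i, ∑ j, (pX i (udot j) p)^2) = ∑ j, ∑ i, (pX i (udot j) p)^2 :=
      Finset.sum_comm
    have hB' : (∑ i, ∑ j, pX i (udot j) p * pX i (fun q => u q j) p
          * (∑ k, pX k (fun q => u q k) p))
        = ∑ j, ∑ i, pX i (udot j) p * pX i (fun q => u q j) p
            * (∑ k, pX k (fun q => u q k) p) := Finset.sum_comm
    have hC' : (∑ i, ∑ j, ∑ k, pX i (udot j) p * pX i (fun q => u q k) p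
          * pX k (fun q => u q j) p)
        = ∑ j, ∑ i, ∑ k, pX i (udot j) p * pX i (fun q => u q k) p
            * pX k (fun q => u q j) p := Finset.sum_comm
    have hD' : (∑ i, ∑ j, ∑ k, pX i (fun q => u q j) p * pX i (fun q => u q k) p
          * pX k (udot j) p)
        = ∑ j, ∑ i, ∑ k, pX i (fun q => u q j) p * pX i (fun q => u q k) p
            * pX k (udot j) p := Finset.sum_comm
    rw [hA', hB', hC', hD', ← Finset.sum_add_distrib, ← Finset.sum_sub_distrib,
      ← Finset.sum_sub_distrib, ← Finset.sum_add_distrib]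
    exact Finset.sum_congr rfl (fun j _ => hptw j p)
    -- continuity / compact support / integrability arsenal
  have cu1 : ∀ j, ContDiff ℝ 1 (fun q : ℝ × E3 => u q j) := fun j => (hu j).of_le (by norm_num)
  have contXu : ∀ i j, Continuous (pX i (fun q : ℝ × E3 => u q j)) := fun i j =>
    (contDiff_pX i (hu j) (by norm_num : (0:WithTop ℕ∞)+1 ≤ 3)).continuous
  have contXv : ∀ i j, Continuous (pX i (udot j)) := fun i j =>
    (contDiff_pX i (hv2 j) (by norm_num : (0:WithTop ℕ∞)+1 ≤ 2)).continuous
  have clapC1 : ∀ j, ContDiff ℝ 1 (lapX (fun q : ℝ × E3 => u q j)) := fun j =>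
    ContDiff.sum (fun i _ => contDiff_pX i
      (contDiff_pX i (hu j) (by norm_num : (2:WithTop ℕ∞)+1 ≤ 3))
      (by norm_num : (1:WithTop ℕ∞)+1 ≤ 2))
  have cMulLap : ∀ i j, ContDiff ℝ 1 (fun q => u q i * lapX (fun q' => u q' j) q) :=
    fun i j => (cu1 i).mul (clapC1 j)
  -- the main integrand F
  have contF : Continuous (fun p : ℝ × E3 => ∑ j, udot j p * (pT (lapX (fun q' => u q' j)) p
      + ∑ i, pX i (fun q => u q i * lapX (fun q' => u q' j) q) p)) :=
    continuous_finset_sum _ (fun j _ => ((hv2 j).continuous.mul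
      (((contDiff_pT (clapC1 j) (by norm_num : (0:WithTop ℕ∞)+1 ≤ 1)).continuous).add
        (continuous_finset_sum _ (fun i _ =>
          (contDiff_pX i (cMulLap i j) (by norm_num : (0:WithTop ℕ∞)+1 ≤ 1)).continuous)))))
  have hcsF : HasCompactSupport (fun p : ℝ × E3 => ∑ j, udot j p
      * (pT (lapX (fun q' => u q' j)) p
        + ∑ i, pX i (fun q => u q i * lapX (fun q' => u q' j) q) p)) :=
    hcs_sum3 (fun j => (hvs j).mul_right)
  have intF : Integrable (fun x : E3 => ∑ j, udot j (t, x)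
      * (pT (lapX (fun q' => u q' j)) (t, x)
        + ∑ i, pX i (fun q => u q i * lapX (fun q' => u q' j) q) (t, x))) :=
    integrable_slice contF hcsF t
  -- the pieces of the right-hand integrand
  have contA : Continuous (fun p : ℝ × E3 => ∑ i, ∑ j, (pX i (udot j) p)^2) :=
    continuous_finset_sum _ (fun i _ => continuous_finset_sum _ (fun j _ =>
      (contXv i j).pow 2))
  have hcsA : HasCompactSupport (fun p : ℝ × E3 => ∑ i, ∑ j, (pX i (udot j) p)^2) :=
    hcs_sum3 (fun i => hcs_sum3 (fun j => hcs_sq (hcs_pX i (hvs j))))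
  have intA : Integrable (fun x : E3 => ∑ i, ∑ j, (pX i (udot j) (t, x))^2) :=
    integrable_slice contA hcsA t
  have contB : Continuous (fun p : ℝ × E3 => ∑ i, ∑ j, pX i (udot j) p
      * pX i (fun q => u q j) p * (∑ k, pX k (fun q => u q k) p)) :=
    continuous_finset_sum _ (fun i _ => continuous_finset_sum _ (fun j _ =>
      ((contXv i j).mul (contXu i j)).mul
        (continuous_finset_sum _ (fun k _ => contXu k k))))
  have hcsB : HasCompactSupport (fun p : ℝ × E3 => ∑ i, ∑ j, pX i (udot j) p
      * pX i (fun q => u q j) p * (∑ k, pX k (fun q => u q k) p)) :=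
    hcs_sum3 (fun i => hcs_sum3 (fun j => ((hcs_pX i (hvs j)).mul_right).mul_right))
  have intB : Integrable (fun x : E3 => ∑ i, ∑ j, pX i (udot j) (t, x)
      * pX i (fun q => u q j) (t, x) * (∑ k, pX k (fun q => u q k) (t, x))) :=
    integrable_slice contB hcsB t
  have contC : Continuous (fun p : ℝ × E3 => ∑ i, ∑ j, ∑ k, pX i (udot j) p
      * pX i (fun q => u q k) p * pX k (fun q => u q j) p) :=
    continuous_finset_sum _ (fun i _ => continuous_finset_sum _ (fun j _ =>
      continuous_finset_sum _ (fun k _ =>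
        ((contXv i j).mul (contXu i k)).mul (contXu k j))))
  have hcsC : HasCompactSupport (fun p : ℝ × E3 => ∑ i, ∑ j, ∑ k, pX i (udot j) p
      * pX i (fun q => u q k) p * pX k (fun q => u q j) p) :=
    hcs_sum3 (fun i => hcs_sum3 (fun j => hcs_sum3 (fun k =>
      ((hcs_pX i (hvs j)).mul_right).mul_right)))
  have intC : Integrable (fun x : E3 => ∑ i, ∑ j, ∑ k, pX i (udot j) (t, x)
      * pX i (fun q => u q k) (t, x) * pX k (fun q => u q j) (t, x)) :=
    integrable_slice contC hcsC t
  have contD : Continuous (fun p : ℝ × E3 => ∑ i, ∑ j, ∑ k, pX i (fun q => u q j) p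
      * pX i (fun q => u q k) p * pX k (udot j) p) :=
    continuous_finset_sum _ (fun i _ => continuous_finset_sum _ (fun j _ =>
      continuous_finset_sum _ (fun k _ =>
        ((contXu i j).mul (contXu i k)).mul (contXv k j))))
  have hcsD : HasCompactSupport (fun p : ℝ × E3 => ∑ i, ∑ j, ∑ k, pX i (fun q => u q j) p
      * pX i (fun q => u q k) p * pX k (udot j) p) :=
    hcs_sum3 (fun i => hcs_sum3 (fun j => hcs_sum3 (fun k =>
      (((hcs_pX i (hus j)).mul_right).mul_right))))
  have intD : Integrable (fun x : E3 => ∑ i, ∑ j, ∑ k, pX i (fun q => u q j) (t, x)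
      * pX i (fun q => u q k) (t, x) * pX k (udot j) (t, x)) :=
    integrable_slice contD hcsD t
  have intG : Integrable (fun x : E3 =>
      ((∑ i, ∑ j, (pX i (udot j) (t, x))^2)
        + (∑ i, ∑ j, pX i (udot j) (t, x) * pX i (fun q => u q j) (t, x)
            * (∑ k, pX k (fun q => u q k) (t, x)))
        - (∑ i, ∑ j, ∑ k, pX i (udot j) (t, x) * pX i (fun q => u q k) (t, x)
            * pX k (fun q => u q j) (t, x))
        - (∑ i, ∑ j, ∑ k, pX i (fun q => u q j) (t, x)
            * pX i (fun q => u q k) (t, x) * pX k (udot j) (t, x)))) :=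
    ((intA.add intB).sub intC).sub intD
  -- regularity of the divergence field
  have cTU' : ∀ j, ContDiff ℝ 2
      (fun q => udot j q - ∑ k, u q k * pX k (fun q' => u q' j) q) := fun j =>
    (hv2 j).sub (ContDiff.sum (fun k _ => ((hu k).of_le (by norm_num : (2:WithTop ℕ∞) ≤ 3)).mul
      (contDiff_pX k (hu j) (by norm_num : (2:WithTop ℕ∞)+1 ≤ 3))))
  have cWf : ∀ j i, ContDiff ℝ 1 (Wf (fun j q => u q j) udot j i) := by
    intro j i
    refine ContDiff.add (ContDiff.add ?_ ?_) ?_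
    · exact ((hv2 j).of_le (by norm_num : (1:WithTop ℕ∞) ≤ 2)).mul
        (contDiff_pX i (cTU' j) (by norm_num : (1:WithTop ℕ∞)+1 ≤ 2))
    · exact (((hv2 j).of_le (by norm_num : (1:WithTop ℕ∞) ≤ 2)).mul (cu1 i)).mul (clapC1 j)
    · exact ContDiff.sum (fun k _ => (((cu1 i).mul
          (contDiff_pX k (hv2 j) (by norm_num : (1:WithTop ℕ∞)+1 ≤ 2))).mul
          (contDiff_pX k (hu j) (by norm_num : (1:WithTop ℕ∞)+1 ≤ 3))).sub
        (((contDiff_pX k (hv2 j) (by norm_num : (1:WithTop ℕ∞)+1 ≤ 2)).mul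
          ((hu k).of_le (by norm_num : (1:WithTop ℕ∞) ≤ 3))).mul
          (contDiff_pX i (hu j) (by norm_num : (1:WithTop ℕ∞)+1 ≤ 3))))
  have hcsWf : ∀ j i, HasCompactSupport (Wf (fun j q => u q j) udot j i) := by
    intro j i
    refine HasCompactSupport.add (HasCompactSupport.add ?_ ?_) ?_
    · exact (hvs j).mul_right
    · exact ((hvs j).mul_right).mul_right
    · exact hcs_sum3 (fun k => hcs_sub (((hus i).mul_right).mul_right)
        (((hcs_pX k (hvs j)).mul_right).mul_right))
  have intW : ∀ j i, Integrable (fun x : E3 => pX i (Wf (fun j q => u q j) udot j i) (t, x)) :=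
    fun j i => integrable_slice
      ((contDiff_pX i (cWf j i) (by norm_num : (0:WithTop ℕ∞)+1 ≤ 1)).continuous)
      (hcs_pX i (hcsWf j i)) t
  -- the key vanishing integral
  have key : (∫ x : E3, ∑ j, udot j (t, x)
        * (pT (lapX (fun q' => u q' j)) (t, x)
          + ∑ i, pX i (fun q => u q i * lapX (fun q' => u q' j) q) (t, x)))
      + (∫ x : E3,
          ((∑ i, ∑ j, (pX i (udot j) (t, x))^2)
            + (∑ i, ∑ j, pX i (udot j) (t, x) * pX i (fun q => u q j) (t, x)
                * (∑ k, pX k (fun q => u q k) (t, x)))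
            - (∑ i, ∑ j, ∑ k, pX i (udot j) (t, x) * pX i (fun q => u q k) (t, x)
                * pX k (fun q => u q j) (t, x))
            - (∑ i, ∑ j, ∑ k, pX i (fun q => u q j) (t, x)
                * pX i (fun q => u q k) (t, x) * pX k (udot j) (t, x)))) = 0 := by
    rw [← integral_add intF intG]
    have : ∀ x : E3, (∑ j, udot j (t, x)
        * (pT (lapX (fun q' => u q' j)) (t, x)
          + ∑ i, pX i (fun q => u q i * lapX (fun q' => u q' j) q) (t, x)))
        + ((∑ i, ∑ j, (pX i (udot j) (t, x))^2)
            + (∑ i, ∑ j, pX i (udot j) (t, x) * pX i (fun q => u q j) (t, x)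
                * (∑ k, pX k (fun q => u q k) (t, x)))
            - (∑ i, ∑ j, ∑ k, pX i (udot j) (t, x) * pX i (fun q => u q k) (t, x)
                * pX k (fun q => u q j) (t, x))
            - (∑ i, ∑ j, ∑ k, pX i (fun q => u q j) (t, x)
                * pX i (fun q => u q k) (t, x) * pX k (udot j) (t, x)))
        = ∑ j, ∑ i, pX i (Wf (fun j q => u q j) udot j i) (t, x) := fun x => hpt2 (t, x)
    simp only [this]
    rw [integral_finset_sum _ (fun j _ => integrable_finset_sum _ (fun i _ => intW j i))]
    refine Finset.sum_eq_zero (fun j _ => ?_)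
    rw [integral_finset_sum _ (fun i _ => intW j i)]
    exact Finset.sum_eq_zero (fun i _ => integral_pX_eq_zero (cWf j i) (hcsWf j i) i t)
  constructor
  · linarith [key]
  -- the inequality
  · have contQ : Continuous (fun p : ℝ × E3 => ∑ i, ∑ j, (pX i (fun q => u q j) p)^2) :=
      continuous_finset_sum _ (fun i _ => continuous_finset_sum _ (fun j _ =>
        (contXu i j).pow 2))
    have hcsQ : HasCompactSupport (fun p : ℝ × E3 => ∑ i, ∑ j, (pX i (fun q => u q j) p)^2) :=
      hcs_sum3 (fun i => hcs_sum3 (fun j => hcs_sq (hcs_pX i (hus j))))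
    have intQ2 : Integrable (fun x : E3 =>
        (∑ i, ∑ j, (pX i (fun q => u q j) (t, x))^2)^2) :=
      integrable_slice (contQ.pow 2) (hcs_sq hcsQ) t
    have intBCD : Integrable (fun x : E3 =>
        (∑ i, ∑ j, pX i (udot j) (t, x) * pX i (fun q => u q j) (t, x)
            * (∑ k, pX k (fun q => u q k) (t, x)))
          - (∑ i, ∑ j, ∑ k, pX i (udot j) (t, x) * pX i (fun q => u q k) (t, x)
              * pX k (fun q => u q j) (t, x))
          - (∑ i, ∑ j, ∑ k, pX i (fun q => u q j) (t, x)
              * pX i (fun q => u q k) (t, x) * pX k (udot j) (t, x))) :=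
      (intB.sub intC).sub intD
    have hptle : ∀ x : E3,
        -((∑ i, ∑ j, (pX i (udot j) (t, x))^2)/8)
          - 54 * (∑ i, ∑ j, (pX i (fun q => u q j) (t, x))^2)^2
        ≤ (∑ i, ∑ j, pX i (udot j) (t, x) * pX i (fun q => u q j) (t, x)
            * (∑ k, pX k (fun q => u q k) (t, x)))
          - (∑ i, ∑ j, ∑ k, pX i (udot j) (t, x) * pX i (fun q => u q k) (t, x)
              * pX k (fun q => u q j) (t, x))
          - (∑ i, ∑ j, ∑ k, pX i (fun q => u q j) (t, x)
              * pX i (fun q => u q k) (t, x) * pX k (udot j) (t, x)) := fun x =>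
      young_bound (fun i j => pX i (fun q => u q j) (t, x)) (fun i j => pX i (udot j) (t, x))
    have hmono : ∫ x : E3, (-((∑ i, ∑ j, (pX i (udot j) (t, x))^2)/8)
          - 54 * (∑ i, ∑ j, (pX i (fun q => u q j) (t, x))^2)^2)
        ≤ ∫ x : E3,
          ((∑ i, ∑ j, pX i (udot j) (t, x) * pX i (fun q => u q j) (t, x)
            * (∑ k, pX k (fun q => u q k) (t, x)))
          - (∑ i, ∑ j, ∑ k, pX i (udot j) (t, x) * pX i (fun q => u q k) (t, x)
              * pX k (fun q => u q j) (t, x))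
          - (∑ i, ∑ j, ∑ k, pX i (fun q => u q j) (t, x)
              * pX i (fun q => u q k) (t, x) * pX k (udot j) (t, x))) :=
      integral_mono ((intA.div_const 8).neg.sub (intQ2.const_mul 54)) intBCD hptle
    have hsplit1 : ∫ x : E3, (-((∑ i, ∑ j, (pX i (udot j) (t, x))^2)/8)
          - 54 * (∑ i, ∑ j, (pX i (fun q => u q j) (t, x))^2)^2)
        = -(∫ x : E3, ∑ i, ∑ j, (pX i (udot j) (t, x))^2)/8
          - 54 * ∫ x : E3, (∑ i, ∑ j, (pX i (fun q => u q j) (t, x))^2)^2 := by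
      have h1 : ∀ x : E3, -((∑ i, ∑ j, (pX i (udot j) (t, x))^2)/8)
            - 54 * (∑ i, ∑ j, (pX i (fun q => u q j) (t, x))^2)^2
          = (-(1/8)) * (∑ i, ∑ j, (pX i (udot j) (t, x))^2)
            - 54 * (∑ i, ∑ j, (pX i (fun q => u q j) (t, x))^2)^2 := by
        intro x; ring
      simp only [h1]
      rw [integral_sub (intA.const_mul (-(1/8))) (intQ2.const_mul 54),
        integral_const_mul, integral_const_mul]
      ring
    have hsplit2 : ∫ x : E3,
          ((∑ i, ∑ j, pX i (udot j) (t, x) * pX i (fun q => u q j) (t, x)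
            * (∑ k, pX k (fun q => u q k) (t, x)))
          - (∑ i, ∑ j, ∑ k, pX i (udot j) (t, x) * pX i (fun q => u q k) (t, x)
              * pX k (fun q => u q j) (t, x))
          - (∑ i, ∑ j, ∑ k, pX i (fun q => u q j) (t, x)
              * pX i (fun q => u q k) (t, x) * pX k (udot j) (t, x)))
        = (∫ x : E3, ∑ i, ∑ j, pX i (udot j) (t, x) * pX i (fun q => u q j) (t, x)
            * (∑ k, pX k (fun q => u q k) (t, x)))
          - (∫ x : E3, ∑ i, ∑ j, ∑ k, pX i (udot j) (t, x) * pX i (fun q => u q k) (t, x)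
              * pX k (fun q => u q j) (t, x))
          - (∫ x : E3, ∑ i, ∑ j, ∑ k, pX i (fun q => u q j) (t, x)
              * pX i (fun q => u q k) (t, x) * pX k (udot j) (t, x)) := by
      have intBC : Integrable (fun x : E3 =>
          (∑ i, ∑ j, pX i (udot j) (t, x) * pX i (fun q => u q j) (t, x)
              * (∑ k, pX k (fun q => u q k) (t, x)))
            - (∑ i, ∑ j, ∑ k, pX i (udot j) (t, x) * pX i (fun q => u q k) (t, x)
                * pX k (fun q => u q j) (t, x))) := intB.sub intC
      rw [integral_sub intBC intD, integral_sub intB intC]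
    have hsplitG : ∫ x : E3,
          ((∑ i, ∑ j, (pX i (udot j) (t, x))^2)
            + (∑ i, ∑ j, pX i (udot j) (t, x) * pX i (fun q => u q j) (t, x)
                * (∑ k, pX k (fun q => u q k) (t, x)))
            - (∑ i, ∑ j, ∑ k, pX i (udot j) (t, x) * pX i (fun q => u q k) (t, x)
                * pX k (fun q => u q j) (t, x))
            - (∑ i, ∑ j, ∑ k, pX i (fun q => u q j) (t, x)
                * pX i (fun q => u q k) (t, x) * pX k (udot j) (t, x)))
        = (∫ x : E3, ∑ i, ∑ j, (pX i (udot j) (t, x))^2)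
          + ((∫ x : E3, ∑ i, ∑ j, pX i (udot j) (t, x) * pX i (fun q => u q j) (t, x)
              * (∑ k, pX k (fun q => u q k) (t, x)))
            - (∫ x : E3, ∑ i, ∑ j, ∑ k, pX i (udot j) (t, x) * pX i (fun q => u q k) (t, x)
                * pX k (fun q => u q j) (t, x))
            - (∫ x : E3, ∑ i, ∑ j, ∑ k, pX i (fun q => u q j) (t, x)
                * pX i (fun q => u q k) (t, x) * pX k (udot j) (t, x))) := by
      have intAB : Integrable (fun x : E3 =>
          (∑ i, ∑ j, (pX i (udot j) (t, x))^2)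
            + (∑ i, ∑ j, pX i (udot j) (t, x) * pX i (fun q => u q j) (t, x)
                * (∑ k, pX k (fun q => u q k) (t, x)))) := intA.add intB
      have intABC : Integrable (fun x : E3 =>
          ((∑ i, ∑ j, (pX i (udot j) (t, x))^2)
            + (∑ i, ∑ j, pX i (udot j) (t, x) * pX i (fun q => u q j) (t, x)
                * (∑ k, pX k (fun q => u q k) (t, x))))
            - (∑ i, ∑ j, ∑ k, pX i (udot j) (t, x) * pX i (fun q => u q k) (t, x)
                * pX k (fun q => u q j) (t, x))) := intAB.sub intC
      rw [integral_sub intABC intD, integral_sub intAB intC, integral_add intA intB]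
      ring
    rw [hsplit1] at hmono
    rw [hsplit2] at hmono
    rw [hsplitG] at key
    have hfin := mul_le_mul_of_nonneg_left hmono hμ.le
    nlinarith [key, hfin, hμ]
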